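/- The kernel of the Lindblad generator ℒ acting on 3×3 complex matrices has complex dimension 4. -/

import Mathlib

open Matrix

noncomputable def E1 : Matrix (Fin 3) (Fin 3) ℂ := Matrix.single 0 1 1
noncomputable def E2 : Matrix (Fin 3) (Fin 3) ℂ := Matrix.single 2 1 1

/-- The Lindblad generator of laser cooling. -/
noncomputable def lind (γ₁ γ₂ : ℝ) (ρ : Matrix (Fin 3) (Fin 3) ℂ) :
    Matrix (Fin 3) (Fin 3) ℂ :=
  (γ₁ : ℂ) • (E1 * ρ * E1ᴴ - (1/2 : ℂ) • (E1ᴴ * E1 * ρ + ρ * (E1ᴴ * E1)))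
    + (γ₂ : ℂ) • (E2 * ρ * E2ᴴ - (1/2 : ℂ) • (E2ᴴ * E2 * ρ + ρ * (E2ᴴ * E2)))

lemma lind_entries (γ₁ γ₂ : ℝ) (ρ : Matrix (Fin 3) (Fin 3) ℂ) :
    lind γ₁ γ₂ ρ = Matrix.of
      ![![(γ₁:ℂ) * ρ 1 1, -((γ₁:ℂ)+γ₂)/2 * ρ 0 1, 0],
        ![-((γ₁:ℂ)+γ₂)/2 * ρ 1 0, -((γ₁:ℂ)+γ₂) * ρ 1 1, -((γ₁:ℂ)+γ₂)/2 * ρ 1 2],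
        ![0, -((γ₁:ℂ)+γ₂)/2 * ρ 2 1, (γ₂:ℂ) * ρ 1 1]] := by
  ext i j
  fin_cases i <;> fin_cases j <;>
    (simp [lind, E1, E2, Matrix.mul_apply, Fin.sum_univ_three, Matrix.single,
      conjTranspose_apply]; try ring)

/-- Linear map from the 4-dimensional function space into 3×3 matrices. -/
noncomputable def Gmap : (Fin 2 → Fin 2 → ℂ) →ₗ[ℂ] Matrix (Fin 3) (Fin 3) ℂ where
  toFun c := Matrix.of ![![c 0 0, 0, c 0 1], ![0, 0, 0], ![c 1 0, 0, c 1 1]]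
  map_add' c d := by
    ext i j
    fin_cases i <;> fin_cases j <;> simp [Matrix.vecHead, Matrix.vecTail]
  map_smul' a c := by
    ext i j
    fin_cases i <;> fin_cases j <;> simp [Matrix.vecHead, Matrix.vecTail]

/-- Linear map extracting the four corner entries. -/
noncomputable def Fmap : Matrix (Fin 3) (Fin 3) ℂ →ₗ[ℂ] (Fin 2 → Fin 2 → ℂ) where
  toFun ρ := fun i j => ρ (![0, 2] i) (![0, 2] j)
  map_add' ρ σ := rfl
  map_smul' a ρ := rfl

lemma Fmap_apply (ρ : Matrix (Fin 3) (Fin 3) ℂ) (i j : Fin 2) :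
    Fmap ρ i j = ρ (![0, 2] i) (![0, 2] j) := rfl

theorem stmt15 (γ₁ γ₂ : ℝ) (h₁ : 0 < γ₁) (h₂ : 0 < γ₂)
    (Lop : Matrix (Fin 3) (Fin 3) ℂ →ₗ[ℂ] Matrix (Fin 3) (Fin 3) ℂ)
    (hLop : ∀ ρ, Lop ρ = lind γ₁ γ₂ ρ) :
    Module.finrank ℂ (LinearMap.ker Lop) = 4 := by
  have hγ : ((γ₁ : ℂ) + γ₂) ≠ 0 := by
    have : ((γ₁ + γ₂ : ℝ) : ℂ) ≠ 0 := by
      simp only [ne_eq, Complex.ofReal_eq_zero]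
      positivity
    simpa using this
  have hγ1 : (γ₁ : ℂ) ≠ 0 := by
    simp only [ne_eq, Complex.ofReal_eq_zero]
    exact h₁.ne'
  -- Gmap lands in the kernel
  have hG : ∀ c, Gmap c ∈ LinearMap.ker Lop := by
    intro c
    rw [LinearMap.mem_ker, hLop, lind_entries]
    ext i j
    fin_cases i <;> fin_cases j <;> simp [Gmap, Matrix.vecHead, Matrix.vecTail]
  -- key: members of the kernel vanish on row/column 1
  have hker : ∀ ρ ∈ LinearMap.ker Lop,
      ρ 1 1 = 0 ∧ ρ 0 1 = 0 ∧ ρ 1 0 = 0 ∧ ρ 1 2 = 0 ∧ ρ 2 1 = 0 := by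
    intro ρ hρ
    rw [LinearMap.mem_ker, hLop, lind_entries] at hρ
    have h11 := congrFun (congrFun hρ 1) 1
    have h01 := congrFun (congrFun hρ 0) 1
    have h10 := congrFun (congrFun hρ 1) 0
    have h12 := congrFun (congrFun hρ 1) 2
    have h21 := congrFun (congrFun hρ 2) 1
    simp only [Matrix.of_apply, Matrix.cons_val', Matrix.cons_val_zero, Matrix.cons_val_one,
      Matrix.head_cons, Matrix.empty_val', Matrix.cons_val_fin_one, Matrix.head_fin_const,
      Matrix.zero_apply, Matrix.cons_val_two, Matrix.tail_cons] at h11 h01 h10 h12 h21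
    have hhalf : -((γ₁:ℂ)+γ₂)/2 ≠ 0 := by
      intro h
      apply hγ
      field_simp at h
      linear_combination -h
    refine ⟨?_, ?_, ?_, ?_, ?_⟩
    · have := mul_eq_zero.mp h11
      rcases this with h | h
      · exact absurd h (neg_ne_zero.mpr hγ)
      · exact h
    · rcases mul_eq_zero.mp h01 with h | h
      · exact absurd h hhalf
      · exact h
    · rcases mul_eq_zero.mp h10 with h | h
      · exact absurd h hhalf
      · exact h
    · rcases mul_eq_zero.mp h12 with h | h
      · exact absurd h hhalf
      · exact h
    · rcases mul_eq_zero.mp h21 with h | h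
      · exact absurd h hhalf
      · exact h
  -- build the linear equivalence
  let G' : (Fin 2 → Fin 2 → ℂ) →ₗ[ℂ] LinearMap.ker Lop := Gmap.codRestrict _ hG
  let F' : LinearMap.ker Lop →ₗ[ℂ] (Fin 2 → Fin 2 → ℂ) :=
    Fmap.comp (LinearMap.ker Lop).subtype
  have hFG : F'.comp G' = LinearMap.id := by
    apply LinearMap.ext
    intro c
    funext i j
    fin_cases i <;> fin_cases j <;>
      simp [F', G', Fmap_apply, Gmap, LinearMap.codRestrict]
  have hGF : G'.comp F' = LinearMap.id := by
    apply LinearMap.ext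
    intro ⟨ρ, hρ⟩
    obtain ⟨e11, e01, e10, e12, e21⟩ := hker ρ hρ
    apply Subtype.ext
    show Gmap (Fmap ρ) = ρ
    ext i j
    fin_cases i <;> fin_cases j <;>
      simp_all [Gmap, Fmap_apply, Matrix.vecHead, Matrix.vecTail]
  let e : (Fin 2 → Fin 2 → ℂ) ≃ₗ[ℂ] LinearMap.ker Lop :=
    LinearEquiv.ofLinear G' F' hGF hFG
  rw [← e.finrank_eq]
  rw [Module.finrank_pi_fintype]
  simp
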